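/- Let φ : (−1,1) → ℝ be a C² solution of Lφ = 0 that is nonincreasing and strictly positive. If there exists x₀ ∈ [0,1) with φ''(x₀) < 0, then φ(x) → −∞ as x → 1⁻ (which contradicts positivity). Formally: under these hypotheses, for all x₀ ∈ [0,1) one has φ''(x₀) ≥ 0. -/

import Mathlib

set_option maxHeartbeats 800000

open Set Filter Topology

/-- For a nonincreasing strictly positive solution `φ` of `Lφ = 0` on `(−1,1)`,
one has `φ''(x₀) ≥ 0` for every `x₀ ∈ [0,1)`. -/
theorem stmt4 (lam mu alp : ℝ) (hlam : 0 < lam) (hmu : 0 < mu) (halp : 0 < alp)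
    (φ φ' φ'' : ℝ → ℝ)
    (hd1 : ∀ x ∈ Set.Ioo (-1 : ℝ) 1, HasDerivAt φ (φ' x) x)
    (hd2 : ∀ x ∈ Set.Ioo (-1 : ℝ) 1, HasDerivAt φ' (φ'' x) x)
    (hode : ∀ x ∈ Set.Ioo (-1 : ℝ) 1,
      mu ^ 2 / 2 * (1 - x ^ 2) ^ 2 * φ'' x - 2 * lam * x * φ' x - alp * φ x = 0)
    (hanti : AntitoneOn φ (Set.Ioo (-1 : ℝ) 1))
    (hpos : ∀ x ∈ Set.Ioo (-1 : ℝ) 1, 0 < φ x) :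
    ∀ x₀ ∈ Set.Ico (0 : ℝ) 1, 0 ≤ φ'' x₀ := by
  intro x₀ hx₀
  by_contra hneg
  push_neg at hneg
  obtain ⟨hx₀0, hx₀1⟩ := hx₀
  have hx₀mem : x₀ ∈ Ioo (-1:ℝ) 1 := ⟨by linarith, hx₀1⟩
  -- φ' ≤ 0 on (-1,1)
  have hphip : ∀ x ∈ Ioo (-1:ℝ) 1, φ' x ≤ 0 := by
    intro x hx
    have hslope : Tendsto (slope φ x) (𝓝[≠] x) (𝓝 (φ' x)) :=
      hasDerivAt_iff_tendsto_slope.mp (hd1 x hx)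
    have h2 : Tendsto (slope φ x) (𝓝[>] x) (𝓝 (φ' x)) :=
      hslope.mono_left (nhdsWithin_mono x fun y hy =>
        Set.mem_compl_singleton_iff.mpr (ne_of_gt hy))
    refine le_of_tendsto h2 ?_
    filter_upwards [Ioo_mem_nhdsGT_of_mem ⟨le_refl x, hx.2⟩] with t ht
    have htmem : t ∈ Ioo (-1:ℝ) 1 := ⟨lt_trans hx.1 ht.1, ht.2⟩
    have hle : φ t ≤ φ x := hanti hx htmem (le_of_lt ht.1)
    rw [slope_def_field]
    apply div_nonpos_of_nonpos_of_nonneg <;> linarith [ht.1]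
  set c : ℝ := mu^2/2 with hc
  have hcpos : 0 < c := by positivity
  set g : ℝ → ℝ := fun x => 2*lam*x*φ' x + alp*φ x with hgdef
  have hgeq : ∀ x ∈ Ioo (-1:ℝ) 1, c*(1-x^2)^2*φ'' x = g x := by
    intro x hx
    have h := hode x hx
    simp only [hgdef]
    linarith
  set E : ℝ → ℝ := fun x => Real.exp (-(2*lam)/(mu^2*(1-x^2))) with hEdef
  have hEpos : ∀ x, 0 < E x := fun x => Real.exp_pos _
  have hEle1 : ∀ x ∈ Ioo (-1:ℝ) 1, E x ≤ 1 := by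
    intro x hx
    have h1 : 0 < 1 - x^2 := by nlinarith [mul_pos (show (0:ℝ) < 1-x by linarith [hx.2]) (show (0:ℝ) < 1+x by linarith [hx.1])]
    have : -(2*lam)/(mu^2*(1-x^2)) ≤ 0 := by
      apply div_nonpos_of_nonpos_of_nonneg <;> nlinarith
    simpa [hEdef] using Real.exp_le_one_iff.mpr this
  -- derivative of E
  have hE : ∀ x ∈ Ioo (-1:ℝ) 1,
      HasDerivAt E (E x * (-(4*lam*x)/(mu^2*(1-x^2)^2))) x := by
    intro x hx
    have h1 : 0 < 1 - x^2 := by nlinarith [mul_pos (show (0:ℝ) < 1-x by linarith [hx.2]) (show (0:ℝ) < 1+x by linarith [hx.1])]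
    have hne : mu^2*(1-x^2) ≠ 0 := by positivity
    have hden : HasDerivAt (fun y : ℝ => mu^2*(1-y^2)) (mu^2*(-(2*x))) x := by
      have h0 : HasDerivAt (fun y : ℝ => 1 - y^2) (-(2*x)) x := by
        simpa using (hasDerivAt_pow 2 x).const_sub 1
      exact h0.const_mul (mu^2)
    have hw : HasDerivAt (fun y : ℝ => -(2*lam)/(mu^2*(1-y^2)))
        (-(2*lam) * (-(mu^2*(-(2*x))) / (mu^2*(1-x^2))^2)) x := by
      simpa [div_eq_mul_inv] using (hden.inv hne).const_mul (-(2*lam))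
    have hexp := hw.exp
    convert hexp using 1
    simp only [hEdef]
    field_simp
    ring
  -- derivative of g
  have hg' : ∀ x ∈ Ioo (-1:ℝ) 1,
      HasDerivAt g (2*lam*φ' x + 2*lam*x*φ'' x + alp*φ' x) x := by
    intro x hx
    have h1 : HasDerivAt (fun y : ℝ => 2*lam*y) (2*lam) x := by
      simpa using (hasDerivAt_id x).const_mul (2*lam)
    exact (h1.mul (hd2 x hx)).add ((hd1 x hx).const_mul alp)
  -- G = g * E is antitone on [x₀, 1)
  have hGanti : AntitoneOn (fun x => g x * E x) (Ico x₀ 1) := by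
    apply antitoneOn_of_deriv_nonpos (convex_Ico x₀ 1)
    · intro x hx
      have hxm : x ∈ Ioo (-1:ℝ) 1 := ⟨by linarith [hx.1], hx.2⟩
      exact (((hg' x hxm).mul (hE x hxm)).continuousAt).continuousWithinAt
    · intro x hx
      rw [interior_Ico] at hx
      have hxm : x ∈ Ioo (-1:ℝ) 1 := ⟨by linarith [hx.1], hx.2⟩
      exact (((hg' x hxm).mul (hE x hxm)).differentiableAt).differentiableWithinAt
    · intro x hx
      rw [interior_Ico] at hx
      have hxm : x ∈ Ioo (-1:ℝ) 1 := ⟨by linarith [hx.1], hx.2⟩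
      have hD : deriv (fun x => g x * E x) x = _ := ((hg' x hxm).mul (hE x hxm)).deriv
      rw [hD]
      have h1 : 0 < 1 - x^2 := by nlinarith [mul_pos (show (0:ℝ) < 1-x by linarith [hxm.2]) (show (0:ℝ) < 1+x by linarith [hxm.1])]
      have hgx : g x = c*(1-x^2)^2*φ'' x := (hgeq x hxm).symm
      have key : (2*lam*φ' x + 2*lam*x*φ'' x + alp*φ' x) * E x
          + g x * (E x * (-(4*lam*x)/(mu^2*(1-x^2)^2)))
          = E x * ((2*lam+alp) * φ' x) := by
        rw [hgx, hc]
        field_simp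
        ring
      rw [key]
      exact mul_nonpos_of_nonneg_of_nonpos (hEpos x).le
        (mul_nonpos_of_nonneg_of_nonpos (by linarith) (hphip x hxm))
  -- consequence: g x ≤ -δ on [x₀,1)
  have hg0 : g x₀ < 0 := by
    have hq : 0 < 1-x₀^2 := by nlinarith [mul_pos (show (0:ℝ) < 1-x₀ by linarith) (show (0:ℝ) < 1+x₀ by linarith)]
    have h1 : 0 < (1-x₀^2)^2 := pow_pos hq 2
    have h2 := hgeq x₀ hx₀mem
    nlinarith [mul_neg_of_pos_of_neg (mul_pos hcpos h1) hneg]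
  set δ : ℝ := -(g x₀ * E x₀) with hδdef
  have hδpos : 0 < δ := by
    have := hEpos x₀
    nlinarith
  have hgle : ∀ x ∈ Ico x₀ 1, g x ≤ -δ := by
    intro x hx
    have hxm : x ∈ Ioo (-1:ℝ) 1 := ⟨by linarith [hx.1], hx.2⟩
    have h1 : g x * E x ≤ g x₀ * E x₀ :=
      hGanti (left_mem_Ico.mpr (by linarith [hx.1, hx.2])) hx hx.1
    have hE1 := hEle1 x hxm
    have hEx := hEpos x
    nlinarith
  set B : ℝ := δ/(4*c) with hBdef
  have hBpos : 0 < B := by positivity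
  -- φ'' x ≤ -B/(1-x)² on [x₀,1)
  have hsecond : ∀ x ∈ Ico x₀ 1, φ'' x * (1-x)^2 ≤ -B := by
    intro x hx
    have hxm : x ∈ Ioo (-1:ℝ) 1 := ⟨by linarith [hx.1], hx.2⟩
    have h1 := hgeq x hxm
    have h2 := hgle x hx
    have hx0 : 0 ≤ x := le_trans hx₀0 hx.1
    have hx1 : x < 1 := hx.2
    have h4 : c*(1-x^2)^2*φ'' x ≤ -δ := by rw [h1]; exact h2
    have hq : 0 < 1-x^2 := by nlinarith [mul_pos (show (0:ℝ) < 1-x by linarith) (show (0:ℝ) < 1+x by linarith)]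
    have hsq : 0 < (1-x^2)^2 := pow_pos hq 2
    have hnegsec : φ'' x < 0 := by nlinarith [mul_pos hcpos hsq]
    have hfac : 0 ≤ c * (1-x)^2 * (-φ'' x) * (4 - (1+x)^2) :=
      mul_nonneg (mul_nonneg (mul_nonneg hcpos.le (sq_nonneg _)) (by linarith))
        (by nlinarith)
    have hmain : 4*c*(φ'' x*(1-x)^2) ≤ -δ := by linarith [hfac, h4]
    rw [hBdef, ← neg_div]
    rw [le_div_iff₀ (by positivity)]
    linarith [hmain]
  -- φ' x + B/(1-x) is antitone on [x₀,1)
  have hinvD : ∀ x ∈ Ico x₀ 1, HasDerivAt (fun y : ℝ => B*(1-y)⁻¹) (B/(1-x)^2) x := by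
    intro x hx
    have hne : (1:ℝ) - x ≠ 0 := ne_of_gt (by linarith [hx.2])
    have h0 : HasDerivAt (fun y : ℝ => 1-y) (-1) x := by
      simpa using (hasDerivAt_id x).const_sub 1
    have := (h0.inv hne).const_mul B
    exact this.congr_deriv (by ring)
  have hhanti : AntitoneOn (fun x => φ' x + B*(1-x)⁻¹) (Ico x₀ 1) := by
    apply antitoneOn_of_deriv_nonpos (convex_Ico x₀ 1)
    · intro x hx
      have hxm : x ∈ Ioo (-1:ℝ) 1 := ⟨by linarith [hx.1], hx.2⟩
      exact (((hd2 x hxm).add (hinvD x hx)).continuousAt).continuousWithinAt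
    · intro x hx
      rw [interior_Ico] at hx
      have hxm : x ∈ Ioo (-1:ℝ) 1 := ⟨by linarith [hx.1], hx.2⟩
      have hxI : x ∈ Ico x₀ 1 := ⟨hx.1.le, hx.2⟩
      exact (((hd2 x hxm).add (hinvD x hxI)).differentiableAt).differentiableWithinAt
    · intro x hx
      rw [interior_Ico] at hx
      have hxm : x ∈ Ioo (-1:ℝ) 1 := ⟨by linarith [hx.1], hx.2⟩
      have hxI : x ∈ Ico x₀ 1 := ⟨hx.1.le, hx.2⟩
      rw [(show HasDerivAt (fun x => φ' x + B*(1-x)⁻¹) _ x from (hd2 x hxm).add (hinvD x hxI)).deriv]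
      have h5 := hsecond x hxI
      have hpow : 0 < (1-x)^2 := by nlinarith [hx.2]
      have : B/(1-x)^2 ≤ -φ'' x := by rw [div_le_iff₀ hpow]; linarith
      linarith
  set A : ℝ := φ' x₀ + B*(1-x₀)⁻¹ with hAdef
  have hphi'le : ∀ x ∈ Ico x₀ 1, φ' x + B*(1-x)⁻¹ ≤ A :=
    fun x hx => hhanti (left_mem_Ico.mpr hx₀1) hx hx.1
  -- k = φ - A x - B log(1-x) is antitone on [x₀,1)
  have hkD : ∀ x ∈ Ico x₀ 1,
      HasDerivAt (fun y => φ y - A*y - B*Real.log (1-y)) (φ' x - A + B*(1-x)⁻¹) x := by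
    intro x hx
    have hxm : x ∈ Ioo (-1:ℝ) 1 := ⟨by linarith [hx.1], hx.2⟩
    have hne : (1:ℝ) - x ≠ 0 := ne_of_gt (by linarith [hx.2])
    have h0 : HasDerivAt (fun y : ℝ => 1-y) (-1) x := by
      simpa using (hasDerivAt_id x).const_sub 1
    have hlog : HasDerivAt (fun y : ℝ => Real.log (1-y)) ((1-x)⁻¹ * (-1)) x :=
      (Real.hasDerivAt_log hne).comp x h0
    have hA : HasDerivAt (fun y : ℝ => A*y) A x := by
      simpa using (hasDerivAt_id x).const_mul A
    have := ((hd1 x hxm).sub hA).sub (hlog.const_mul B)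
    exact this.congr_deriv (by ring)
  have hkanti : AntitoneOn (fun x => φ x - A*x - B*Real.log (1-x)) (Ico x₀ 1) := by
    apply antitoneOn_of_deriv_nonpos (convex_Ico x₀ 1)
    · intro x hx
      exact ((hkD x hx).continuousAt).continuousWithinAt
    · intro x hx
      rw [interior_Ico] at hx
      have hxI : x ∈ Ico x₀ 1 := ⟨hx.1.le, hx.2⟩
      exact ((hkD x hxI).differentiableAt).differentiableWithinAt
    · intro x hx
      rw [interior_Ico] at hx
      have hxI : x ∈ Ico x₀ 1 := ⟨hx.1.le, hx.2⟩
      rw [(hkD x hxI).deriv]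
      linarith [hphi'le x hxI]
  set K : ℝ := φ x₀ - A*x₀ - B*Real.log (1-x₀) with hKdef
  -- choose x close to 1
  set ε : ℝ := min (1-x₀) (Real.exp (-(K + |A|)/B)) / 2 with hεdef
  have hεpos : 0 < ε := by
    have : 0 < min (1-x₀) (Real.exp (-(K + |A|)/B)) :=
      lt_min (by linarith) (Real.exp_pos _)
    linarith
  have hεle : ε ≤ (1-x₀)/2 := by
    have := min_le_left (1-x₀) (Real.exp (-(K + |A|)/B))
    rw [hεdef]; linarith
  set x : ℝ := 1 - ε with hxdef
  have hx₀x : x₀ ≤ x := by rw [hxdef]; linarith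
  have hx1 : x < 1 := by rw [hxdef]; linarith
  have hxI : x ∈ Ico x₀ 1 := ⟨hx₀x, hx1⟩
  have hxm : x ∈ Ioo (-1:ℝ) 1 := ⟨by linarith, hx1⟩
  have hK : φ x - A*x - B*Real.log (1-x) ≤ K :=
    hkanti (left_mem_Ico.mpr hx₀1) hxI hx₀x
  have h1x : (1:ℝ) - x = ε := by rw [hxdef]; ring
  have hlogε : Real.log ε < -(K + |A|)/B := by
    have hlt : ε < Real.exp (-(K + |A|)/B) := by
      have := min_le_right (1-x₀) (Real.exp (-(K + |A|)/B))
      have := Real.exp_pos (-(K + |A|)/B)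
      rw [hεdef]; linarith
    calc Real.log ε < Real.log (Real.exp (-(K + |A|)/B)) := Real.log_lt_log hεpos hlt
    _ = -(K + |A|)/B := Real.log_exp _
  have hBlog : B * Real.log ε < -(K + |A|) := by
    have h := (mul_lt_mul_of_pos_left hlogε hBpos)
    have heq : B * (-(K + |A|)/B) = -(K + |A|) := by field_simp
    linarith [heq ▸ h]
  have hx0' : (0:ℝ) ≤ x := le_trans hx₀0 hx₀x
  have hAx : A*x ≤ |A| := by
    nlinarith [mul_nonneg (sub_nonneg.mpr (le_abs_self A)) hx0',
      mul_nonneg (abs_nonneg A) (by linarith : (0:ℝ) ≤ 1 - x)]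
  have hφx : φ x < 0 := by
    rw [h1x] at hK
    linarith
  exact absurd (hpos x hxm) (not_lt.mpr hφx.le)
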